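/- For every θ ∈ (0, π/2), (2π − 4θ)·cos²θ + 6·sin θ·cos θ − 3π + 6θ < 0. Consequently the function θ ↦ tan θ − (π/2 − θ)·tan²θ has negative second derivative, i.e., is strictly concave, on (0, π/2). -/

import Mathlib

open Real

private lemma hasDerivAt_aux (x : ℝ) :
    HasDerivAt (fun t : ℝ => 2 * t + t * cos t - 3 * sin t)
      (2 - 2 * cos x - x * sin x) x := by
  have h1 : HasDerivAt (fun t : ℝ => 2 * t) 2 x := by
    simpa using (hasDerivAt_id x).const_mul 2
  have h2 : HasDerivAt (fun t : ℝ => t * cos t) (1 * cos x + x * (-sin x)) x :=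
    (hasDerivAt_id x).mul (Real.hasDerivAt_cos x)
  have h3 : HasDerivAt (fun t : ℝ => 3 * sin t) (3 * cos x) x := by
    simpa using (Real.hasDerivAt_sin x).const_mul 3
  refine ((h1.add h2).sub h3).congr_deriv ?_
  ring

private lemma keypos (t : ℝ) (ht : t ∈ Set.Ioo (0 : ℝ) π) :
    3 * sin t < 2 * t + t * cos t := by
  have hmono : StrictMonoOn (fun t : ℝ => 2 * t + t * cos t - 3 * sin t)
      (Set.Icc 0 π) := by
    apply strictMonoOn_of_deriv_pos (convex_Icc 0 π)
    · fun_prop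
    · intro x hx
      rw [interior_Icc] at hx
      rw [(hasDerivAt_aux x).deriv]
      have h2 : 0 < x / 2 := by linarith [hx.1]
      have h2' : x / 2 < π / 2 := by linarith [hx.2]
      have hs : 0 < sin (x / 2) :=
        Real.sin_pos_of_pos_of_lt_pi h2 (by linarith [Real.pi_pos])
      have hc : 0 < cos (x / 2) := Real.cos_pos_of_mem_Ioo ⟨by linarith, h2'⟩
      have htan := Real.lt_tan h2 h2'
      rw [Real.tan_eq_sin_div_cos, lt_div_iff₀ hc] at htan
      have hx2 : 2 * (x / 2) = x := by ring
      have hcos := Real.cos_two_mul' (x / 2)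
      rw [hx2] at hcos
      have hsin := Real.sin_two_mul (x / 2)
      rw [hx2] at hsin
      have hpy := Real.sin_sq_add_cos_sq (x / 2)
      nlinarith [mul_pos hs (sub_pos.mpr htan)]
  have h0 : (0 : ℝ) ∈ Set.Icc (0 : ℝ) π := ⟨le_refl 0, Real.pi_pos.le⟩
  have htm : t ∈ Set.Icc (0 : ℝ) π := ⟨ht.1.le, ht.2.le⟩
  have h := hmono h0 htm ht.1
  simp only [Real.cos_zero, Real.sin_zero, mul_zero, zero_mul, mul_one] at h
  linarith

private lemma part1 (θ : ℝ) (hθ : θ ∈ Set.Ioo (0 : ℝ) (π / 2)) :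
    (2 * π - 4 * θ) * cos θ ^ 2 + 6 * sin θ * cos θ - 3 * π + 6 * θ < 0 := by
  have hk := keypos (π - 2 * θ) ⟨by linarith [hθ.2], by linarith [hθ.1]⟩
  have hs : sin (π - 2 * θ) = 2 * sin θ * cos θ := by
    rw [Real.sin_pi_sub, Real.sin_two_mul]
  have hc : cos (π - 2 * θ) = -(2 * cos θ ^ 2 - 1) := by
    rw [Real.cos_pi_sub, Real.cos_two_mul]
  rw [hs, hc] at hk
  nlinarith [hk]

private noncomputable def gd1 (θ : ℝ) : ℝ :=
  1 + 2 * tan θ ^ 2 - (π - 2 * θ) * (tan θ + tan θ ^ 3)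

private lemma one_add_tan_sq' (θ : ℝ) (h : cos θ ≠ 0) :
    1 + tan θ ^ 2 = 1 / cos θ ^ 2 := by
  rw [Real.tan_eq_sin_div_cos]
  field_simp
  linarith [Real.sin_sq_add_cos_sq θ]

private lemma hasDerivAt_tan' (θ : ℝ) (h : cos θ ≠ 0) :
    HasDerivAt tan (1 + tan θ ^ 2) θ := by
  rw [one_add_tan_sq' θ h]
  exact Real.hasDerivAt_tan h

private lemma hasDerivAt_g (θ : ℝ) (h : cos θ ≠ 0) :
    HasDerivAt (fun θ : ℝ => tan θ - (π / 2 - θ) * tan θ ^ 2) (gd1 θ) θ := by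
  have ht := hasDerivAt_tan' θ h
  have h1 : HasDerivAt (fun x : ℝ => π / 2 - x) (-1) θ := by
    simpa using (hasDerivAt_id θ).const_sub (π / 2)
  have h2 : HasDerivAt (fun x : ℝ => tan x ^ 2) (2 * tan θ * (1 + tan θ ^ 2)) θ := by
    refine (ht.pow 2).congr_deriv ?_
    all_goals (push_cast; ring)
  refine (ht.sub (h1.mul h2)).congr_deriv ?_
  unfold gd1
  ring

private lemma hasDerivAt_gd1 (θ : ℝ) (h : cos θ ≠ 0) :
    HasDerivAt gd1
      (6 * tan θ + 6 * tan θ ^ 3 - (π - 2 * θ) * (1 + tan θ ^ 2) * (1 + 3 * tan θ ^ 2)) θ := by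
  have ht := hasDerivAt_tan' θ h
  have hA : HasDerivAt (fun x : ℝ => 2 * tan x ^ 2)
      (2 * (2 * tan θ * (1 + tan θ ^ 2))) θ := by
    refine HasDerivAt.const_mul 2 ?_
    refine (ht.pow 2).congr_deriv ?_
    all_goals (push_cast; ring)
  have hB : HasDerivAt (fun x : ℝ => tan x + tan x ^ 3)
      ((1 + tan θ ^ 2) + 3 * tan θ ^ 2 * (1 + tan θ ^ 2)) θ := by
    refine ht.add ?_
    refine (ht.pow 3).congr_deriv ?_
    all_goals (push_cast; ring)
  have hC : HasDerivAt (fun x : ℝ => π - 2 * x) (-2) θ := by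
    simpa using ((hasDerivAt_id θ).const_mul 2).const_sub π
  have := ((hasDerivAt_const θ (1 : ℝ)).add hA).sub (hC.mul hB)
  refine this.congr_deriv ?_
  ring

theorem second_derivative_negative :
    (∀ θ ∈ Set.Ioo (0 : ℝ) (π / 2),
        (2 * π - 4 * θ) * cos θ ^ 2 + 6 * sin θ * cos θ - 3 * π + 6 * θ < 0) ∧
      StrictConcaveOn ℝ (Set.Ioo (0 : ℝ) (π / 2))
        (fun θ : ℝ => tan θ - (π / 2 - θ) * tan θ ^ 2) := by
  constructor
  · exact part1
  · apply strictConcaveOn_of_deriv2_neg (convex_Ioo _ _)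
    · intro x hx
      have hcx : 0 < cos x :=
        Real.cos_pos_of_mem_Ioo ⟨by linarith [hx.1, Real.pi_pos], hx.2⟩
      exact (hasDerivAt_g x hcx.ne').continuousAt.continuousWithinAt
    · intro x hx
      rw [isOpen_Ioo.interior_eq] at hx
      have hcx : 0 < cos x :=
        Real.cos_pos_of_mem_Ioo ⟨by linarith [hx.1, Real.pi_pos], hx.2⟩
      have hEq : deriv (fun θ : ℝ => tan θ - (π / 2 - θ) * tan θ ^ 2) =ᶠ[nhds x] gd1 := by
        have hne : ∀ᶠ y in nhds x, cos y ≠ 0 :=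
          Real.continuous_cos.continuousAt.eventually_ne hcx.ne'
        filter_upwards [hne] with y hy
        exact (hasDerivAt_g y hy).deriv
      have h2 : deriv^[2] (fun θ : ℝ => tan θ - (π / 2 - θ) * tan θ ^ 2) x
          = 6 * tan x + 6 * tan x ^ 3
            - (π - 2 * x) * (1 + tan x ^ 2) * (1 + 3 * tan x ^ 2) := by
        show deriv (deriv (fun θ : ℝ => tan θ - (π / 2 - θ) * tan θ ^ 2)) x = _
        rw [hEq.deriv_eq, (hasDerivAt_gd1 x hcx.ne').deriv]
      rw [h2]
      have hp := part1 x hx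
      have hid : (6 * tan x + 6 * tan x ^ 3
            - (π - 2 * x) * (1 + tan x ^ 2) * (1 + 3 * tan x ^ 2)) * cos x ^ 4
          = (2 * π - 4 * x) * cos x ^ 2 + 6 * sin x * cos x - 3 * π + 6 * x := by
        have h1' : cos x ^ 2 * (1 + tan x ^ 2) = 1 := by
          rw [one_add_tan_sq' x hcx.ne']
          field_simp
        have hts : sin x = tan x * cos x := by
          rw [Real.tan_eq_sin_div_cos]
          field_simp
        linear_combination
          (6 * tan x * cos x ^ 2
            - (π - 2 * x) * (cos x ^ 2 * (1 + tan x ^ 2) + 3 + 2 * tan x ^ 2 * cos x ^ 2)) * h1'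
          - 6 * cos x * hts
      nlinarith [hp, hid, pow_pos hcx 4]
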